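/- The flow-sensitive residual residual₂(D, P^S_Σ) = reach(D ↾ {d ∈ δ | ∃ t ∈ P^S_Σ ⇓ OId, uses(t, d)}), which removes all transitions of D not used by any ground trace generated by the static program and then applies the reachability reduction, is equivalent to the original DATE with respect to the static program: residual₂(D, P^S_Σ) ≅_{P^S_Σ} D. -/

import Mathlib

open Classical

/-- A property automaton over states `Q` and alphabet `E`: a deterministic and
total transition relation is represented as a transition function. -/
structure PA (Q : Type*) (E : Type*) where
  init : Q
  bad : Set Q
  next : Q → E → Q

namespace PA

variable {Q E : Type*}

/-- Iterated application of the transition function along a ground trace. -/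
def run (π : PA Q E) (q : Q) (t : List E) : Q := t.foldl π.next q

/-- A ground trace satisfies a property automaton iff no prefix of it leads
from the initial state to a bad state. -/
def Sat (t : List E) (π : PA Q E) : Prop :=
  ∀ t' : List E, t' <+: t → π.run π.init t' ∉ π.bad

/-- Equivalence of two property automata with respect to a set of ground traces. -/
def EquivOn (T : Set (List E)) (π π' : PA Q E) : Prop :=
  ∀ t ∈ T, Sat t π ↔ Sat t π'

end PA

/-- A static program: a set of static parametrised traces over identifiers `α`,
together with a must-alias equivalence relation and a may-alias relation. -/
structure SProg (α : Type*) (E : Type*) where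
  traces : Set (List (α × E))
  must : α → α → Prop
  may : α → α → Prop
  must_equiv : Equivalence must
  must_sub_may : ∀ {x y : α}, must x y → may x y

namespace SProg

variable {α E : Type*}

-- Projection of a static parametrised trace onto an identifier `x`,
-- yielding the set of possible ground traces.
open Classical in
noncomputable def proj (P : SProg α E) (x : α) : List (α × E) → Set (List E)
  | [] => {[]}
  | (x', e) :: st =>
      if P.must x x' then (e :: ·) '' P.proj x st
      else if P.may x x' then P.proj x st ∪ (e :: ·) '' P.proj x st
      else P.proj x st

/-- The projection of a static program onto a single identifier. -/
def projId (P : SProg α E) (x : α) : Set (List E) :=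
  {t | ∃ st ∈ P.traces, t ∈ P.proj x st}

/-- The projection of a static program onto all identifiers (`P ⇓ OId`). -/
def projAll (P : SProg α E) : Set (List E) :=
  {t | ∃ st ∈ P.traces, ∃ x : α, t ∈ P.proj x st}

end SProg

/-- Satisfaction of a property automaton by a static parametrised trace:
every projection onto every identifier satisfies the automaton. -/
def PA.SSat {α Q E : Type*} (P : SProg α E) (st : List (α × E)) (π : PA Q E) : Prop :=
  ∀ x : α, ∀ t ∈ P.proj x st, PA.Sat t π

/-- Equivalence of two property automata with respect to a static program. -/
def PA.SEquiv {α Q E : Type*} (P : SProg α E) (π π' : PA Q E) : Prop :=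
  ∀ st ∈ P.traces, PA.SSat P st π ↔ PA.SSat P st π'

/-- A transition of a DATE: source state, event, condition, action, target state. -/
structure DTrans (Q : Type*) (E : Type*) (Θ : Type*) where
  src : Q
  ev : E
  cond : Θ → Bool
  act : Θ → Θ
  tgt : Q

/-- A DATE (without timers/channels): states `Q`, events `E`, monitoring
variable states `Θ`, initial state, initial monitoring state, bad states,
and a transition relation. -/
structure DATE (Q : Type*) (E : Type*) (Θ : Type*) where
  init : Q
  th0 : Θ
  bad : Set Q
  delta : Set (DTrans Q E Θ)

namespace DATE

variable {Q E Θ : Type*}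

/-- Determinism: from each state, any two distinct transitions with the same
event have conditions that are never simultaneously true. -/
def Deterministic (D : DATE Q E Θ) : Prop :=
  ∀ d ∈ D.delta, ∀ d' ∈ D.delta,
    d.src = d'.src → d.ev = d'.ev → d ≠ d' →
      ∀ θ : Θ, ¬(d.cond θ = true ∧ d'.cond θ = true)

/-- The concrete transition function `Δ`. -/
noncomputable def step (D : DATE Q E Θ) (s : Q × Θ) (e : E) : Q × Θ :=
  if h : ∃ d ∈ D.delta, d.src = s.1 ∧ d.ev = e ∧ d.cond s.2 = true
  then (h.choose.tgt, h.choose.act s.2)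
  else s

/-- `Δ*`: iterated concrete transition function along a ground trace. -/
noncomputable def run (D : DATE Q E Θ) (s : Q × Θ) (t : List E) : Q × Θ :=
  t.foldl D.step s

/-- A ground trace satisfies a DATE iff no prefix of it drives `Δ*` from the
initial configuration into a bad state. -/
def Sat (t : List E) (D : DATE Q E Θ) : Prop :=
  ∀ t' : List E, t' <+: t → (D.run (D.init, D.th0) t').1 ∉ D.bad

/-- Equivalence of two DATEs with respect to a set of ground traces. -/
def EquivOn (T : Set (List E)) (D D' : DATE Q E Θ) : Prop :=
  ∀ t ∈ T, Sat t D ↔ Sat t D'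

/-- The static transition relation `q →e_approx q'`. -/
def ApproxStep (D : DATE Q E Θ) (q : Q) (e : E) (q' : Q) : Prop :=
  (∃ d ∈ D.delta, d.src = q ∧ d.ev = e ∧ d.tgt = q' ∧ ¬ ∀ θ : Θ, d.cond θ = false)
  ∨ (q' = q ∧ ¬ ∃ d ∈ D.delta, d.src = q ∧ d.ev = e ∧ d.tgt ≠ q ∧ ∀ θ : Θ, d.cond θ = true)

/-- The static transition function on sets of states. -/
def approxSet (D : DATE Q E Θ) (S : Set Q) (e : E) : Set Q :=
  {q' | ∃ q ∈ S, D.ApproxStep q e q'}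

/-- `approxΔ*`: iterated static transition function along a ground trace. -/
def approxRun (D : DATE Q E Θ) (S : Set Q) (t : List E) : Set Q :=
  t.foldl D.approxSet S

/-- `q ↪ q'`: `q'` is reachable from `q` via the static transition relation. -/
def Reach (D : DATE Q E Θ) (q q' : Q) : Prop :=
  ∃ t : List E, q' ∈ D.approxRun {q} t

/-- `badAfter(q)`: `q` is reachable from the initial state and can reach a bad state. -/
def BadAfter (D : DATE Q E Θ) (q : Q) : Prop :=
  D.Reach D.init q ∧ ∃ q' ∈ D.bad, D.Reach q q'

/-- `goodEntryPoint(q)`. -/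
def GoodEntryPoint (D : DATE Q E Θ) (q : Q) : Prop :=
  ¬ D.BadAfter q ∧ ∃ q' : Q, ∃ e : E, D.BadAfter q' ∧ D.ApproxStep q' e q

/-- `useful(q)`. -/
def Useful (D : DATE Q E Θ) (q : Q) : Prop :=
  D.BadAfter q ∨ D.GoodEntryPoint q

/-- Restriction of a DATE to a set of transitions (`D ↾ δ'`). -/
def restrict (D : DATE Q E Θ) (δ' : Set (DTrans Q E Θ)) : DATE Q E Θ :=
  { D with delta := D.delta ∩ δ' }

/-- The reachability-reduced DATE `reach(D)`: only useful states and
transitions between useful states are kept. -/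
def reachReduce (D : DATE Q E Θ) : DATE Q E Θ :=
  D.restrict {d | D.Useful d.src ∧ D.Useful d.tgt}

/-- Alphabet restriction `D ↾ Σ'`. -/
def alphaRestrict (D : DATE Q E Θ) (A : Set E) : DATE Q E Θ :=
  D.restrict {d | d.ev ∈ A}

/-- `Σ(T)`: the set of events occurring in some trace of `T`. -/
def eventsOf (T : Set (List E)) : Set E :=
  {e | ∃ t ∈ T, e ∈ t}

/-- Component-wise union of two DATEs (sharing initial state and initial
monitoring state). -/
def union (D₁ D₂ : DATE Q E Θ) : DATE Q E Θ :=
  { init := D₁.init, th0 := D₁.th0, bad := D₁.bad ∪ D₂.bad,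
    delta := D₁.delta ∪ D₂.delta }

/-- Component-wise union of a family of DATEs, with given initial state and
initial monitoring state. -/
def unionFamily {ι : Type*} (q0 : Q) (θ0 : Θ) (f : ι → DATE Q E Θ) : DATE Q E Θ :=
  { init := q0, th0 := θ0, bad := ⋃ i, (f i).bad, delta := ⋃ i, (f i).delta }

/-- A ground trace `t` uses a transition `d`. -/
def Uses (D : DATE Q E Θ) (t : List E) (d : DTrans Q E Θ) : Prop :=
  (¬ ∀ θ : Θ, d.cond θ = false) ∧
    ∃ t' : List E, (t' ++ [d.ev]) <+: t ∧ d.src ∈ D.approxRun {D.init} t'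

/-- Satisfaction of a DATE by a static parametrised trace. -/
def SSat {α : Type*} (P : SProg α E) (st : List (α × E)) (D : DATE Q E Θ) : Prop :=
  ∀ x : α, ∀ t ∈ P.proj x st, Sat t D

/-- Equivalence of two DATEs with respect to a static program. -/
def SEquiv {α : Type*} (P : SProg α E) (D D' : DATE Q E Θ) : Prop :=
  ∀ st ∈ P.traces, SSat P st D ↔ SSat P st D'

end DATE

/-- Translation of a property automaton into a DATE with `Θ = Unit`:
each transition `(q, e, q')` becomes `q —e|true↦skip→ q'`. -/
def PA.toDATE {Q E : Type*} (π : PA Q E) : DATE Q E Unit :=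
  { init := π.init, th0 := (), bad := π.bad,
    delta := {d | d.cond = (fun _ => true) ∧ d.act = id ∧ d.tgt = π.next d.src d.ev} }

/-- The flow-sensitive residual `residual₂(D, P)`. -/
def DATE.residual2 {α Q E Θ : Type*} (D : DATE Q E Θ) (P : SProg α E) : DATE Q E Θ :=
  (D.restrict {d | ∃ t ∈ P.projAll, D.Uses t d}).reachReduce

/-- Consecutive application of the flow-sensitive residual over a list of
static program over-approximations. -/
def DATE.residual2List {α Q E Θ : Type*} (D : DATE Q E Θ) :
    List (SProg α E) → DATE Q E Θ
  | [] => D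
  | P :: Ps => DATE.residual2List (D.residual2 P) Ps

namespace DATE

variable {Q E Θ : Type*}

lemma run_append (D : DATE Q E Θ) (s : Q × Θ) (u v : List E) :
    D.run s (u ++ v) = D.run (D.run s u) v :=
  List.foldl_append

lemma fired_eq_of (D : DATE Q E Θ) (hdet : D.Deterministic) {s : Q × Θ} {e : E}
    {d d' : DTrans Q E Θ}
    (hd : d ∈ D.delta) (h1 : d.src = s.1) (h2 : d.ev = e) (h3 : d.cond s.2 = true)
    (hd' : d' ∈ D.delta) (h1' : d'.src = s.1) (h2' : d'.ev = e) (h3' : d'.cond s.2 = true) :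
    d = d' := by
  by_contra hne
  exact hdet d hd d' hd' (h1.trans h1'.symm) (h2.trans h2'.symm) hne s.2 ⟨h3, h3'⟩

lemma step_eq_of_fire (D : DATE Q E Θ) (hdet : D.Deterministic) {s : Q × Θ} {e : E}
    {d : DTrans Q E Θ} (hd : d ∈ D.delta) (h1 : d.src = s.1) (h2 : d.ev = e)
    (h3 : d.cond s.2 = true) :
    D.step s e = (d.tgt, d.act s.2) := by
  have h : ∃ d ∈ D.delta, d.src = s.1 ∧ d.ev = e ∧ d.cond s.2 = true := ⟨d, hd, h1, h2, h3⟩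
  obtain ⟨hm, hs, he, hc⟩ := h.choose_spec
  have hcd : h.choose = d := D.fired_eq_of hdet hm hs he hc hd h1 h2 h3
  unfold DATE.step
  rw [dif_pos h, hcd]

lemma step_eq_of_nofire (D : DATE Q E Θ) {s : Q × Θ} {e : E}
    (h : ¬ ∃ d ∈ D.delta, d.src = s.1 ∧ d.ev = e ∧ d.cond s.2 = true) :
    D.step s e = s := by
  unfold DATE.step
  rw [dif_neg h]

lemma deterministic_restrict (D : DATE Q E Θ) (hdet : D.Deterministic)
    (δ' : Set (DTrans Q E Θ)) : (D.restrict δ').Deterministic :=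
  fun d hd d' hd' => hdet d hd.1 d' hd'.1

lemma step_restrict_eq (D : DATE Q E Θ) (hdet : D.Deterministic) (δ' : Set (DTrans Q E Θ))
    (s : Q × Θ) (e : E)
    (hk : ∀ d ∈ D.delta, d.src = s.1 → d.ev = e → d.cond s.2 = true → d ∈ δ') :
    (D.restrict δ').step s e = D.step s e := by
  by_cases h : ∃ d ∈ D.delta, d.src = s.1 ∧ d.ev = e ∧ d.cond s.2 = true
  · obtain ⟨d, hd, h1, h2, h3⟩ := h
    rw [D.step_eq_of_fire hdet hd h1 h2 h3,
        (D.restrict δ').step_eq_of_fire (D.deterministic_restrict hdet δ')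
          ⟨hd, hk d hd h1 h2 h3⟩ h1 h2 h3]
  · rw [D.step_eq_of_nofire h, (D.restrict δ').step_eq_of_nofire
      fun ⟨d, hd, hp⟩ => h ⟨d, hd.1, hp⟩]

lemma run_restrict_eq (D : DATE Q E Θ) (hdet : D.Deterministic) (δ' : Set (DTrans Q E Θ)) :
    ∀ (t : List E) (s : Q × Θ),
      (∀ (u : List E) (e : E), u ++ [e] <+: t → ∀ d ∈ D.delta,
        d.src = (D.run s u).1 → d.ev = e → d.cond (D.run s u).2 = true → d ∈ δ') →
      (D.restrict δ').run s t = D.run s t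
  | [], _, _ => rfl
  | e :: t, s, hk => by
    have hs : (D.restrict δ').step s e = D.step s e :=
      D.step_restrict_eq hdet δ' s e fun d hd h1 h2 h3 =>
        hk [] e ⟨t, rfl⟩ d hd h1 h2 h3
    show (D.restrict δ').run ((D.restrict δ').step s e) t = D.run (D.step s e) t
    rw [hs]
    exact D.run_restrict_eq hdet δ' t (D.step s e) fun u e' hp d hd h1 h2 h3 =>
      hk (e :: u) e' (by obtain ⟨w, rfl⟩ := hp; exact ⟨w, rfl⟩) d hd h1 h2 h3

lemma approxRun_mono (D : DATE Q E Θ) :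
    ∀ (t : List E) {S S' : Set Q}, S ⊆ S' → D.approxRun S t ⊆ D.approxRun S' t
  | [], _, _, h => h
  | e :: t, S, S', h =>
    approxRun_mono D t fun q' hq' => by
      obtain ⟨q, hq, hstep⟩ := hq'
      exact ⟨q, h hq, hstep⟩

lemma step_approxStep (D : DATE Q E Θ) (s : Q × Θ) (e : E) :
    D.ApproxStep s.1 e (D.step s e).1 := by
  by_cases h : ∃ d ∈ D.delta, d.src = s.1 ∧ d.ev = e ∧ d.cond s.2 = true
  · obtain ⟨hm, h1, h2, h3⟩ := h.choose_spec
    unfold DATE.step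
    rw [dif_pos h]
    exact Or.inl ⟨h.choose, hm, h1, h2, rfl, fun hall => by simp [hall s.2] at h3⟩
  · rw [D.step_eq_of_nofire h]
    exact Or.inr ⟨rfl, fun ⟨d, hd, h1, h2, _, hall⟩ => h ⟨d, hd, h1, h2, hall s.2⟩⟩

lemma run_mem_approxRun (D : DATE Q E Θ) :
    ∀ (t : List E) (s : Q × Θ) (S : Set Q), s.1 ∈ S → (D.run s t).1 ∈ D.approxRun S t
  | [], _, _, h => h
  | e :: t, s, S, h =>
    run_mem_approxRun D t (D.step s e) (D.approxSet S e) ⟨s.1, h, D.step_approxStep s e⟩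

lemma reach_refl (D : DATE Q E Θ) (q : Q) : D.Reach q q := ⟨[], rfl⟩

lemma reach_of_step (D : DATE Q E Θ) {q q' q'' : Q} {e : E}
    (h : D.ApproxStep q e q') (h2 : D.Reach q' q'') : D.Reach q q'' := by
  obtain ⟨t, ht⟩ := h2
  exact ⟨e :: t, D.approxRun_mono t (Set.singleton_subset_iff.2 (show ∃ a ∈ ({q} : Set Q), D.ApproxStep a e q' from ⟨q, rfl, h⟩)) ht⟩

lemma sat_reachReduce_iff (D : DATE Q E Θ) (hdet : D.Deterministic) (t : List E) :
    Sat t D.reachReduce ↔ Sat t D := by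
  have hdetR : D.reachReduce.Deterministic := D.deterministic_restrict hdet _
  constructor
  · -- Sat reach → Sat D
    intro hR u hu hbad
    have heq : D.reachReduce.run (D.init, D.th0) u = D.run (D.init, D.th0) u := by
      apply D.run_restrict_eq hdet _ u
      intro v e hve d hd h1 h2 h3
      obtain ⟨w, hw⟩ := hve
      have hu' : u = v ++ e :: w := by rw [← hw]; simp
      have hrw : D.run (D.init, D.th0) u = D.run (D.run (D.init, D.th0) v) (e :: w) := by
        rw [hu', D.run_append]
      have hsrc : D.BadAfter d.src := by
        refine ⟨⟨v, by rw [h1]; exact D.run_mem_approxRun v _ _ rfl⟩,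
          (D.run (D.init, D.th0) u).1, hbad, e :: w, ?_⟩
        rw [hrw]
        exact D.run_mem_approxRun (e :: w) _ {d.src} h1.symm
      have hstep : D.run (D.init, D.th0) (v ++ [e]) =
          (d.tgt, d.act (D.run (D.init, D.th0) v).2) := by
        rw [D.run_append]
        exact D.step_eq_of_fire hdet hd h1 h2 h3
      have htgt : D.BadAfter d.tgt := by
        refine ⟨⟨v ++ [e], ?_⟩, (D.run (D.init, D.th0) u).1, hbad, w, ?_⟩
        · have := D.run_mem_approxRun (v ++ [e]) (D.init, D.th0) {D.init} rfl
          rwa [hstep] at this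
        · have := D.run_mem_approxRun w (D.run (D.init, D.th0) (v ++ [e])) {d.tgt}
            (by rw [hstep]; rfl)
          rwa [← D.run_append, hw] at this
      exact ⟨Or.inl hsrc, Or.inl htgt⟩
    exact hR u hu (heq.symm ▸ hbad)
  · -- Sat D → Sat reach
    intro hD
    have inv : ∀ u : List E,
        D.reachReduce.run (D.init, D.th0) u = D.run (D.init, D.th0) u ∨
        ∀ b ∈ D.bad, ¬ D.Reach (D.reachReduce.run (D.init, D.th0) u).1 b := by
      intro u
      induction u using List.reverseRecOn with
      | nil => exact Or.inl rfl
      | append_singleton u e ih =>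
        have hRrun : D.reachReduce.run (D.init, D.th0) (u ++ [e]) =
            D.reachReduce.step (D.reachReduce.run (D.init, D.th0) u) e :=
          D.reachReduce.run_append _ u [e]
        have hDrun : D.run (D.init, D.th0) (u ++ [e]) =
            D.step (D.run (D.init, D.th0) u) e := D.run_append _ u [e]
        rcases ih with heq | hnb
        · set s1 := D.run (D.init, D.th0) u with hs1
          by_cases hf : ∃ d ∈ D.delta, d.src = s1.1 ∧ d.ev = e ∧ d.cond s1.2 = true
          · obtain ⟨d, hd, h1, h2, h3⟩ := hf
            by_cases huse : D.Useful d.src ∧ D.Useful d.tgt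
            · left
              rw [hRrun, hDrun, heq, D.step_eq_of_fire hdet hd h1 h2 h3,
                D.reachReduce.step_eq_of_fire hdetR ⟨hd, huse⟩ h1 h2 h3]
            · right
              intro b hb hr
              have hnof : D.reachReduce.step s1 e = s1 := by
                apply step_eq_of_nofire
                rintro ⟨d', ⟨hd'1, hd'2⟩, h1', h2', h3'⟩
                exact huse (D.fired_eq_of hdet hd'1 h1' h2' h3' hd h1 h2 h3 ▸ hd'2)
              rw [hRrun, heq, hnof] at hr
              have hBA : D.BadAfter s1.1 :=
                ⟨⟨u, D.run_mem_approxRun u _ _ rfl⟩, b, hb, hr⟩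
              have hntgt : ¬ D.Useful d.tgt := fun h => huse ⟨Or.inl (h1.symm ▸ hBA), h⟩
              exact hntgt (Or.inr ⟨fun hba => hntgt (Or.inl hba), s1.1, e, hBA,
                Or.inl ⟨d, hd, h1, h2, rfl, fun hall => by simp [hall s1.2] at h3⟩⟩)
          · left
            rw [hRrun, hDrun, heq, D.step_eq_of_nofire hf,
              D.reachReduce.step_eq_of_nofire fun ⟨d, hd, hp⟩ => hf ⟨d, hd.1, hp⟩]
        · right
          intro b hb hr
          rw [hRrun] at hr
          set s1 := D.reachReduce.run (D.init, D.th0) u with hs1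
          by_cases hf : ∃ d ∈ D.reachReduce.delta,
              d.src = s1.1 ∧ d.ev = e ∧ d.cond s1.2 = true
          · obtain ⟨d, hd, h1, h2, h3⟩ := hf
            rw [D.reachReduce.step_eq_of_fire hdetR hd h1 h2 h3] at hr
            exact hnb b hb (D.reach_of_step
              (Or.inl ⟨d, hd.1, h1, h2, rfl, fun hall => by simp [hall s1.2] at h3⟩) hr)
          · rw [D.reachReduce.step_eq_of_nofire hf] at hr
            exact hnb b hb hr
    intro u hu hmem
    have hmem' : (D.reachReduce.run (D.init, D.th0) u).1 ∈ D.bad := hmem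
    rcases inv u with heq | hnb
    · exact (hD u hu) (heq ▸ hmem')
    · exact hnb _ hmem' (D.reach_refl _)

end DATE

/-- The flow-sensitive residual
`residual₂(D, P^S_Σ) = reach(D ↾ {d ∈ δ | ∃ t ∈ P^S_Σ ⇓ OId, uses(t, d)})` is
equivalent to the original DATE with respect to the static program. -/
theorem residual2_equiv {α Q E Θ : Type*} (D : DATE Q E Θ)
    (hdet : D.Deterministic) (P : SProg α E) :
    DATE.SEquiv P
      ((D.restrict {d | ∃ t ∈ P.projAll, D.Uses t d}).reachReduce) D := by
  set U : Set (DTrans Q E Θ) := {d | ∃ t ∈ P.projAll, D.Uses t d} with hU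
  have key : ∀ t ∈ P.projAll,
      DATE.Sat t ((D.restrict U).reachReduce) ↔ DATE.Sat t D := by
    intro t ht
    rw [DATE.sat_reachReduce_iff _ (D.deterministic_restrict hdet _) t]
    have hrun : ∀ u, u <+: t →
        (D.restrict U).run (D.init, D.th0) u = D.run (D.init, D.th0) u := by
      intro u hu
      apply D.run_restrict_eq hdet _ u
      intro v e hve d hd h1 h2 h3
      exact ⟨t, ht, fun hall => by simp [hall] at h3,
        v, by rw [h2]; exact hve.trans hu,
        by rw [h1]; exact D.run_mem_approxRun v _ _ rfl⟩
    constructor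
    · intro h u hu hmem
      exact h u hu ((hrun u hu).symm ▸ hmem)
    · intro h u hu hmem
      have hmem' : ((D.restrict U).run (D.init, D.th0) u).1 ∈ D.bad := hmem
      exact h u hu ((hrun u hu) ▸ hmem')
  intro st hst
  constructor
  · intro h x tt htt
    exact (key tt ⟨st, hst, x, htt⟩).mp (h x tt htt)
  · intro h x tt htt
    exact (key tt ⟨st, hst, x, htt⟩).mpr (h x tt htt)
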